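/- There exists a constant C > 0 such that the following holds for every n ≥ 1. Let V₁,…,V₅ be a partition of [2n−1] into sets whose sizes are each ⌊(2n−1)/5⌋ or ⌈(2n−1)/5⌉, and let R be the graph on [2n−1] with uv ∈ E(R) if and only if u ∈ V_i, v ∈ V_j and i − j ≡ ±1 (mod 5). Then every n-element subset X ⊆ [2n−1] contains two disjoint subsets A, B ⊆ X such that every vertex of A is adjacent in R to every vertex of B and |A|·|B| ≥ n²/25 − C·n. Equivalently, the complementary graph B of R on [2n−1] has the property that every n-vertex induced subgraph of B contains two disjoint vertex sets A, B with |A|·|B| ≥ n²/25 − C·n and no B-edges between A and B. -/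
import Mathlib

open Finset

/-- The red graph of the 5-cycle blow-up coloring: given an assignment `P` of vertices to
the five classes `V₁, …, V₅`, vertices `u, v` are adjacent iff their classes differ by
`±1 (mod 5)`. -/
def cycleBlowup {N : ℕ} (P : Fin N → Fin 5) : SimpleGraph (Fin N) :=
  SimpleGraph.fromRel (fun u v =>
    ((P u : ℕ) : ZMod 5) - ((P v : ℕ) : ZMod 5) = 1 ∨
    ((P u : ℕ) : ZMod 5) - ((P v : ℕ) : ZMod 5) = -1)

lemma core (n x1 x2 x3 x4 x5 : ℝ) (hn : 1 ≤ n)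
    (h2 : 0 ≤ x2) (h3 : 0 ≤ x3) (_h4 : 0 ≤ x4) (_h5 : 0 ≤ x5)
    (m3 : x3 ≤ x1) (m4 : x4 ≤ x1) (hcap : x1 ≤ (2*n+3)/5) (hmax : n ≤ 5*x1)
    (hsum : x1+x2+x3+x4+x5 = n)
    (hf1 : x1*(x2+x5) < n^2/25 - 5*n) (hf3 : x3*(x2+x4) < n^2/25 - 5*n) : False := by
  nlinarith [mul_nonneg h3 h2,
    mul_nonneg (sub_nonneg.2 m3) (sub_nonneg.2 m4),
    mul_nonneg (by linarith : (0:ℝ) ≤ x1 - n/5) (by linarith : (0:ℝ) ≤ (2*n+3)/5 - x1),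
    mul_nonneg (by linarith : (0:ℝ) ≤ (2*n+3)/5 - x1) (by linarith : (0:ℝ) ≤ n + 6)]

lemma key (n : ℝ) (x : Fin 5 → ℝ) (hn : 1 ≤ n) (hx : ∀ i, 0 ≤ x i)
    (hcap : ∀ i, x i ≤ (2*n+3)/5) (hsum : ∑ j, x j = n) :
    ∃ i : Fin 5, n^2/25 - 5*n ≤ x i * (x (i+1) + x (i-1)) := by
  by_contra hcon
  push_neg at hcon
  obtain ⟨i, -, hi⟩ := Finset.exists_max_image Finset.univ x ⟨0, Finset.mem_univ 0⟩
  have hrot : x i + x (i+1) + x (i+2) + x (i+3) + x (i+4) = n := by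
    have h1 : ∑ j, x j = ∑ j : Fin 5, x (i + j) :=
      (Fintype.sum_equiv (Equiv.addLeft i) _ _ (fun j => rfl)).symm
    rw [h1, Fin.sum_univ_five] at hsum
    simpa using hsum
  have e4 : ∀ j : Fin 5, j - 1 = j + 4 := by decide
  have e31 : ∀ j : Fin 5, j + 2 + 1 = j + 3 := by decide
  have e32 : ∀ j : Fin 5, j + 2 - 1 = j + 1 := by decide
  have hf1 := hcon i
  rw [e4] at hf1
  have hf3 := hcon (i + 2)
  rw [e31, e32, add_comm (x (i+3))] at hf3
  exact core n (x i) (x (i+1)) (x (i+2)) (x (i+3)) (x (i+4)) hn (hx _) (hx _) (hx _) (hx _)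
    (hi _ (mem_univ _)) (hi _ (mem_univ _)) (hcap i)
    (by have := hi (i+1) (mem_univ _); have := hi (i+2) (mem_univ _);
        have := hi (i+3) (mem_univ _); have := hi (i+4) (mem_univ _); linarith)
    hrot hf1 hf3

theorem stmt19 :
    ∃ C : ℝ, 0 < C ∧ ∀ n : ℕ, 1 ≤ n → ∀ P : Fin (2 * n - 1) → Fin 5,
      (∀ j : Fin 5,
        (Finset.univ.filter (fun v => P v = j)).card = (2 * n - 1) / 5 ∨
        (Finset.univ.filter (fun v => P v = j)).card = (2 * n - 1 + 4) / 5) →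
      ∀ X : Finset (Fin (2 * n - 1)), X.card = n →
        ∃ A B : Finset (Fin (2 * n - 1)), A ⊆ X ∧ B ⊆ X ∧ Disjoint A B ∧
          (∀ a ∈ A, ∀ b ∈ B, (cycleBlowup P).Adj a b) ∧
          (n : ℝ) ^ 2 / 25 - C * n ≤ (A.card : ℝ) * B.card := by
  refine ⟨5, by norm_num, ?_⟩
  intro n hn P hP X hX
  set x : Fin 5 → ℕ := fun j => (X.filter (fun v => P v = j)).card with hxdef
  have hsum : ∑ j, x j = n := by
    rw [← hX]
    exact (Finset.card_eq_sum_card_fiberwise (fun v _ => Finset.mem_univ (P v))).symm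
  have hcap : ∀ j, (x j : ℝ) ≤ (2*(n:ℝ)+3)/5 := by
    intro j
    have hle : x j ≤ (univ.filter (fun v => P v = j)).card :=
      card_le_card (filter_subset_filter _ (subset_univ X))
    have hle2 : x j ≤ (2 * n + 3) / 5 := by
      rcases hP j with h | h <;> rw [h] at hle <;> omega
    calc (x j : ℝ) ≤ (((2 * n + 3) / 5 : ℕ) : ℝ) := by exact_mod_cast hle2
      _ ≤ ((2 * n + 3 : ℕ) : ℝ) / 5 := Nat.cast_div_le
      _ = (2*(n:ℝ)+3)/5 := by push_cast; ring
  obtain ⟨i, hi⟩ := key n (fun j => (x j : ℝ)) (by exact_mod_cast hn) (fun i => by positivity)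
    hcap (by rw [← Nat.cast_sum]; exact_mod_cast hsum)
  classical
  refine ⟨X.filter (fun v => P v = i), X.filter (fun v => P v = i+1 ∨ P v = i-1),
    filter_subset _ _, filter_subset _ _, ?_, ?_, ?_⟩
  · rw [Finset.disjoint_left]
    intro v hv hv'
    simp only [mem_filter] at hv hv'
    have d1 : ∀ j : Fin 5, ¬(j = j + 1 ∨ j = j - 1) := by decide
    exact d1 i (hv.2 ▸ hv'.2)
  · intro a ha b hb
    simp only [mem_filter] at ha hb
    have hne : a ≠ b := by
      intro h
      subst h
      have d1 : ∀ j : Fin 5, ¬(j = j + 1 ∨ j = j - 1) := by decide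
      exact d1 i (ha.2 ▸ hb.2)
    rw [cycleBlowup, SimpleGraph.fromRel_adj]
    refine ⟨hne, Or.inl ?_⟩
    rcases hb.2 with h | h
    · right
      rw [ha.2, h]
      exact (by decide : ∀ j : Fin 5, ((j:ℕ) : ZMod 5) - (((j+1 : Fin 5):ℕ) : ZMod 5) = -1) i
    · left
      rw [ha.2, h]
      exact (by decide : ∀ j : Fin 5, ((j:ℕ) : ZMod 5) - (((j-1 : Fin 5):ℕ) : ZMod 5) = 1) i
  · have hB : (X.filter (fun v => P v = i+1 ∨ P v = i-1)).card = x (i+1) + x (i-1) := by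
      rw [filter_or, card_union_of_disjoint]
      rw [Finset.disjoint_left]
      intro v hv hv'
      simp only [mem_filter] at hv hv'
      have d2 : ∀ j : Fin 5, j + 1 ≠ j - 1 := by decide
      exact d2 i (hv.2 ▸ hv'.2)
    have hA : (X.filter (fun v => P v = i)).card = x i := rfl
    rw [hA, hB]
    calc (n:ℝ)^2/25 - 5*n ≤ (x i : ℝ) * ((x (i+1) : ℝ) + (x (i-1) : ℝ)) := hi
      _ = (x i : ℝ) * ((x (i+1) + x (i-1) : ℕ) : ℝ) := by push_cast; ring
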